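/- For every n ≥ 1, the n-th symmetric product of the Riemann sphere is homeomorphic to complex projective n-space: SP^n(ℙ¹(ℂ)) ≃ ℙ^n(ℂ), i.e. there is a homeomorphism between the quotient of (Projectivization ℂ (Fin 2 → ℂ))^n by the permutation action of S_n and Projectivization ℂ (Fin (n+1) → ℂ). (The homeomorphism sends an unordered n-tuple of points of ℙ¹(ℂ), viewed as roots, to the projective class of coefficients of the degree-n binary form vanishing at those points.) -/

import Mathlib

/-- The setoid on `Fin n → X` whose classes are orbits of the permutation action
of `Equiv.Perm (Fin n)`. -/
def SPSetoid (n : ℕ) (X : Type*) : Setoid (Fin n → X) where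
  r f g := ∃ σ : Equiv.Perm (Fin n), f ∘ σ = g
  iseqv := by
    constructor
    · exact fun f => ⟨Equiv.refl _, rfl⟩
    · rintro f g ⟨σ, rfl⟩
      exact ⟨σ.symm, by funext i; simp⟩
    · rintro f g h ⟨σ, rfl⟩ ⟨τ, rfl⟩
      exact ⟨τ.trans σ, by funext i; simp⟩

/-- The `n`-th symmetric product `SP^n(X) = X^n / S_n`, with the quotient topology. -/
def SP (n : ℕ) (X : Type*) [TopologicalSpace X] : Type _ :=
  Quotient (SPSetoid n X)

instance (n : ℕ) (X : Type*) [TopologicalSpace X] : TopologicalSpace (SP n X) :=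
  inferInstanceAs (TopologicalSpace (Quotient (SPSetoid n X)))


open Projectivization in
/-- The quotient topology on a projectivization, coming from the topology on
`{v : V // v ≠ 0}`. -/
instance (K V : Type*) [DivisionRing K] [AddCommGroup V] [Module K V]
    [TopologicalSpace V] : TopologicalSpace (Projectivization K V) :=
  inferInstanceAs (TopologicalSpace (Quotient (projectivizationSetoid K V)))


open Polynomial

noncomputable section SPAuxSection

/-- The linear binary form (dehomogenized): `C (v 1) * X - C (v 0)`. -/
noncomputable def lpoly (v : Fin 2 → ℂ) : ℂ[X] := C (v 1) * X - C (v 0)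

/-- Product of the linear forms attached to a tuple of vectors. -/
noncomputable def tpoly {n : ℕ} (f : Fin n → (Fin 2 → ℂ)) : ℂ[X] := ∏ i, lpoly (f i)

lemma lpoly_ne_zero {v : Fin 2 → ℂ} (hv : v ≠ 0) : lpoly v ≠ 0 := by
  intro h
  apply hv
  have h1 := congrArg (fun p => Polynomial.coeff p 1) h
  have h0 := congrArg (fun p => Polynomial.coeff p 0) h
  simp [lpoly, coeff_sub, coeff_C_mul] at h1 h0
  funext i
  fin_cases i <;> simp [h0, h1]

lemma lpoly_smul (a : ℂ) (v : Fin 2 → ℂ) : lpoly (a • v) = C a * lpoly v := by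
  simp only [lpoly, Pi.smul_apply, smul_eq_mul, map_mul]
  ring

lemma natDegree_lpoly_le (v : Fin 2 → ℂ) : (lpoly v).natDegree ≤ 1 := by
  refine (natDegree_sub_le _ _).trans ?_
  simp only [max_le_iff]
  constructor
  · exact (natDegree_C_mul_le _ _).trans (by simp)
  · simp

lemma tpoly_ne_zero {n : ℕ} {f : Fin n → (Fin 2 → ℂ)} (hf : ∀ i, f i ≠ 0) : tpoly f ≠ 0 :=
  Finset.prod_ne_zero_iff.2 fun i _ => lpoly_ne_zero (hf i)

lemma natDegree_tpoly_le {n : ℕ} (f : Fin n → (Fin 2 → ℂ)) : (tpoly f).natDegree ≤ n := by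
  refine (natDegree_prod_le _ _).trans ?_
  calc ∑ i, (lpoly (f i)).natDegree ≤ ∑ _i : Fin n, 1 :=
        Finset.sum_le_sum fun i _ => natDegree_lpoly_le _
  _ = n := by simp

lemma tpoly_comp_perm {n : ℕ} (f : Fin n → (Fin 2 → ℂ)) (σ : Equiv.Perm (Fin n)) :
    tpoly (f ∘ σ) = tpoly f := by
  simpa [tpoly] using Equiv.prod_comp σ (fun i => lpoly (f i))

lemma tpoly_smul {n : ℕ} (a : Fin n → ℂ) (f : Fin n → (Fin 2 → ℂ)) :
    tpoly (fun i => a i • f i) = C (∏ i, a i) * tpoly f := by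
  simp [tpoly, lpoly_smul, Finset.prod_mul_distrib, map_prod]

lemma tpoly_cons {n : ℕ} (v : Fin 2 → ℂ) (f : Fin n → (Fin 2 → ℂ)) :
    tpoly (Fin.cons v f) = lpoly v * tpoly f := by
  simp [tpoly, Fin.prod_univ_succ]

/-- The coefficient vector of `tpoly f`. -/
noncomputable def cvec {n : ℕ} (f : Fin n → (Fin 2 → ℂ)) : Fin (n + 1) → ℂ :=
  fun k => (tpoly f).coeff k

lemma cvec_ne_zero {n : ℕ} {f : Fin n → (Fin 2 → ℂ)} (hf : ∀ i, f i ≠ 0) : cvec f ≠ 0 := by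
  intro h
  have h1 : (tpoly f).natDegree < n + 1 := Nat.lt_succ_of_le (natDegree_tpoly_le f)
  have h2 : cvec f ⟨(tpoly f).natDegree, h1⟩ = 0 := by rw [h]; rfl
  exact (leadingCoeff_ne_zero.2 (tpoly_ne_zero hf)) h2

lemma tpoly_eq_of_cvec_smul {n : ℕ} {f g : Fin n → (Fin 2 → ℂ)} {c : ℂ}
    (h : ∀ k : Fin (n + 1), cvec f k = c * cvec g k) : tpoly f = C c * tpoly g := by
  ext k
  rw [coeff_C_mul]
  rcases le_or_gt k n with hk | hk
  · exact h ⟨k, Nat.lt_succ_of_le hk⟩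
  · rw [coeff_eq_zero_of_natDegree_lt (lt_of_le_of_lt (natDegree_tpoly_le f) hk),
      coeff_eq_zero_of_natDegree_lt (lt_of_le_of_lt (natDegree_tpoly_le g) hk), mul_zero]

end SPAuxSection

noncomputable section SPAuxSection2
open Polynomial

lemma coeff_lpoly_mul (v : Fin 2 → ℂ) (p : ℂ[X]) (k : ℕ) :
    (lpoly v * p).coeff k = v 1 * (if k = 0 then 0 else p.coeff (k - 1)) - v 0 * p.coeff k := by
  have : lpoly v * p = C (v 1) * (X * p) - C (v 0) * p := by rw [lpoly]; ring
  rw [this, coeff_sub, coeff_C_mul, coeff_C_mul]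
  cases k with
  | zero => simp
  | succ m => simp [coeff_X_mul]

lemma continuous_coeff_tpoly (n : ℕ) (k : ℕ) :
    Continuous fun f : Fin n → (Fin 2 → ℂ) => (tpoly f).coeff k := by
  induction n generalizing k with
  | zero =>
    have : ∀ f : Fin 0 → (Fin 2 → ℂ), tpoly f = 1 := fun f => by simp [tpoly]
    simp only [this]
    exact continuous_const
  | succ n ih =>
    have hrw : ∀ f : Fin (n + 1) → (Fin 2 → ℂ),
        (tpoly f).coeff k = f 0 1 * (if k = 0 then 0 else (tpoly (Fin.tail f)).coeff (k - 1))
          - f 0 0 * (tpoly (Fin.tail f)).coeff k := by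
      intro f
      have : tpoly f = lpoly (f 0) * tpoly (Fin.tail f) := by
        rw [← tpoly_cons (f 0) (Fin.tail f), Fin.cons_self_tail]
      rw [this, coeff_lpoly_mul]
    simp only [hrw]
    have htail : Continuous fun f : Fin (n + 1) → (Fin 2 → ℂ) => Fin.tail f :=
      continuous_pi fun i => continuous_apply (i.succ)
    have h00 : Continuous fun f : Fin (n + 1) → (Fin 2 → ℂ) => f 0 0 :=
      (continuous_apply (0 : Fin 2)).comp (continuous_apply (0 : Fin (n + 1)))
    have h01 : Continuous fun f : Fin (n + 1) → (Fin 2 → ℂ) => f 0 1 :=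
      (continuous_apply (1 : Fin 2)).comp (continuous_apply (0 : Fin (n + 1)))
    refine Continuous.sub (h01.mul ?_) (h00.mul ((ih k).comp htail))
    split
    · exact continuous_const
    · exact (ih (k - 1)).comp htail

/-- Surjectivity core: every nonzero polynomial of degree at most `n` is, up to a
nonzero constant, of the form `tpoly f`. -/
lemma exists_tuple (n : ℕ) : ∀ P : ℂ[X], P ≠ 0 → P.natDegree ≤ n →
    ∃ (f : Fin n → (Fin 2 → ℂ)) (e : ℂ), (∀ i, f i ≠ 0) ∧ e ≠ 0 ∧ tpoly f = C e * P := by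
  induction n with
  | zero =>
    intro P hP hdeg
    have hPC : P = C (P.coeff 0) := eq_C_of_natDegree_le_zero hdeg
    have hc : P.coeff 0 ≠ 0 := fun h => hP (by rw [hPC, h, map_zero])
    refine ⟨fun i => i.elim0, (P.coeff 0)⁻¹, fun i => i.elim0, inv_ne_zero hc, ?_⟩
    rw [hPC]
    simp [tpoly, ← map_mul, inv_mul_cancel₀ hc]
  | succ n ih =>
    intro P hP hdeg
    rcases Nat.eq_zero_or_pos P.natDegree with h0 | hpos
    · obtain ⟨f, e, hf, he, hfe⟩ := ih P hP (by omega)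
      refine ⟨Fin.cons ![1, 0] f, -e, ?_, neg_ne_zero.2 he, ?_⟩
      · intro i
        refine Fin.cases ?_ (fun j => hf j) i
        intro h
        simpa using congrFun h 0
      · rw [tpoly_cons, hfe]
        have : lpoly ![1, 0] = -1 := by
          simp [lpoly]
        rw [this, map_neg]
        ring
    · obtain ⟨r, hr⟩ := Complex.exists_root (natDegree_pos_iff_degree_pos.1 hpos)
      set Q := P / (X - C r) with hQdef
      have hPQ : (X - C r) * Q = P := (mul_div_eq_iff_isRoot).2 hr
      have hQ : Q ≠ 0 := by
        intro h
        rw [h, mul_zero] at hPQ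
        exact hP hPQ.symm
      have hdQ : Q.natDegree ≤ n := by
        have := natDegree_mul (X_sub_C_ne_zero r) hQ
        rw [hPQ, natDegree_X_sub_C] at this
        omega
      obtain ⟨f, e, hf, he, hfe⟩ := ih Q hQ hdQ
      refine ⟨Fin.cons ![r, 1] f, e, ?_, he, ?_⟩
      · intro i
        refine Fin.cases ?_ (fun j => hf j) i
        intro h
        simpa using congrFun h 1
      · rw [tpoly_cons, hfe]
        have : lpoly ![r, 1] = X - C r := by simp [lpoly]
        rw [this, ← hPQ]
        ring

end SPAuxSection2

noncomputable section SPAuxSection3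
open Polynomial

lemma eval_lpoly (v : Fin 2 → ℂ) (r : ℂ) : (lpoly v).eval r = v 1 * r - v 0 := by
  simp [lpoly]

/-- Injectivity core: if two tuples of nonzero vectors have proportional `tpoly`s, then
the tuples of projective classes agree up to a permutation. -/
lemma exists_perm_of_tpoly_eq :
    ∀ {n : ℕ} (f g : Fin n → (Fin 2 → ℂ)) (hf : ∀ i, f i ≠ 0) (hg : ∀ i, g i ≠ 0)
      (c : ℂ), c ≠ 0 → tpoly f = C c * tpoly g →
      ∃ σ : Equiv.Perm (Fin n), ∀ i,
        Projectivization.mk ℂ (g (σ i)) (hg _) = Projectivization.mk ℂ (f i) (hf i) := by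
  intro n
  induction n with
  | zero => exact fun f g hf hg c hc h => ⟨Equiv.refl _, fun i => i.elim0⟩
  | succ n ih =>
    intro f g hf hg c hc h
    -- find an index j with `g j` proportional to `f 0`
    have key : ∃ (j : Fin (n + 1)) (u : ℂ), u ≠ 0 ∧ lpoly (g j) = C u * lpoly (f 0) ∧
        Projectivization.mk ℂ (g j) (hg j) = Projectivization.mk ℂ (f 0) (hf 0) := by
      rcases eq_or_ne (f 0 1) 0 with h1 | h1
      · -- `f 0` is the point at infinity
        have h00 : f 0 0 ≠ 0 := by
          intro h00
          apply hf 0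
          funext i; fin_cases i <;> simp [h00, h1]
        have hlf : lpoly (f 0) = -C (f 0 0) := by
          rw [lpoly, h1, map_zero, zero_mul, zero_sub]
        -- degree counting gives an infinite point among the `g j`
        have hdf : (tpoly f).natDegree ≤ n := by
          have e1 : tpoly f = lpoly (f 0) * tpoly (Fin.tail f) := by
            rw [← tpoly_cons (f 0) (Fin.tail f), Fin.cons_self_tail]
          rw [e1, natDegree_mul (lpoly_ne_zero (hf 0))
              (tpoly_ne_zero (f := Fin.tail f) fun i => hf i.succ),
            hlf, natDegree_neg, natDegree_C, zero_add]
          exact natDegree_tpoly_le _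
        have hdg : (tpoly g).natDegree ≤ n := by
          have := natDegree_C_mul hc (p := tpoly g)
          rw [← this, ← h]; exact hdf
        have hexj : ∃ j, g j 1 = 0 := by
          by_contra hcon
          push_neg at hcon
          have : (tpoly g).natDegree = n + 1 := by
            rw [tpoly, natDegree_prod _ _ (fun i _ => lpoly_ne_zero (hg i))]
            have : ∀ i ∈ Finset.univ, (lpoly (g i)).natDegree = 1 := by
              intro i _
              have : lpoly (g i) = C (g i 1) * X + C (-(g i 0)) := by
                rw [lpoly, map_neg]; ring
              rw [this, natDegree_linear (hcon i)]
            rw [Finset.sum_congr rfl this]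
            simp
          omega
        obtain ⟨j, hj1⟩ := hexj
        have hj0 : g j 0 ≠ 0 := by
          intro h00
          apply hg j
          funext i; fin_cases i <;> simp [h00, hj1]
        refine ⟨j, g j 0 / f 0 0, div_ne_zero hj0 h00, ?_, ?_⟩
        · rw [hlf, lpoly, hj1, map_zero, zero_mul, zero_sub, mul_neg, ← map_mul,
            div_mul_cancel₀ _ h00]
        · rw [Projectivization.mk_eq_mk_iff']
          refine ⟨g j 0 / f 0 0, ?_⟩
          funext i
          fin_cases i <;> simp [Pi.smul_apply, smul_eq_mul, h1, hj1, div_mul_cancel₀ _ h00]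
      · -- `f 0` is a finite point, with root `r`
        set r := f 0 0 / f 0 1 with hr
        have hroot : (tpoly f).eval r = 0 := by
          rw [tpoly, eval_prod]
          refine Finset.prod_eq_zero (Finset.mem_univ 0) ?_
          rw [eval_lpoly, hr, mul_div_cancel₀ _ h1, sub_self]
        have hrootg : (tpoly g).eval r = 0 := by
          have := congrArg (Polynomial.eval r) h
          rw [hroot, eval_mul, eval_C] at this
          exact (mul_eq_zero.1 this.symm).resolve_left hc |>.symm ▸ rfl
        have : ∃ j ∈ Finset.univ, (lpoly (g j)).eval r = 0 := by
          rw [tpoly, eval_prod] at hrootg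
          exact Finset.prod_eq_zero_iff.1 hrootg
        obtain ⟨j, -, hj⟩ := this
        rw [eval_lpoly, sub_eq_zero] at hj
        have hj1 : g j 1 ≠ 0 := by
          intro h11
          apply hg j
          funext i
          fin_cases i <;> simp [h11, ← hj, h11]
        refine ⟨j, g j 1 / f 0 1, div_ne_zero hj1 h1, ?_, ?_⟩
        · have e0 : g j 1 / f 0 1 * f 0 1 = g j 1 := div_mul_cancel₀ _ h1
          have e1 : g j 1 / f 0 1 * f 0 0 = g j 0 := by
            field_simp
            rw [mul_comm (g j 1), ← hj, hr]
            field_simp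
          rw [lpoly, lpoly, mul_sub, ← mul_assoc, ← map_mul, e0, ← map_mul, e1]
        · rw [Projectivization.mk_eq_mk_iff']
          refine ⟨g j 1 / f 0 1, ?_⟩
          funext i
          fin_cases i <;>
            simp only [Pi.smul_apply, smul_eq_mul]
          · rw [show (⟨0, by omega⟩ : Fin 2) = 0 from rfl]
            rw [div_mul_eq_mul_div, mul_comm, ← div_mul_eq_mul_div, ← hr, ← hj]
            ring
          · exact div_mul_cancel₀ _ h1
    obtain ⟨j, u, hu, hlp, hmk⟩ := key
    -- cancel the common factor
    have e1 : tpoly f = lpoly (f 0) * tpoly (Fin.tail f) := by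
      rw [← tpoly_cons (f 0) (Fin.tail f), Fin.cons_self_tail]
    have e2 : tpoly g = lpoly (g j) * tpoly (g ∘ j.succAbove) := by
      rw [tpoly, Fin.prod_univ_succAbove _ j]; rfl
    have hcanc : tpoly (Fin.tail f) = C (c * u) * tpoly (g ∘ j.succAbove) := by
      apply mul_left_cancel₀ (lpoly_ne_zero (hf 0))
      rw [← e1, h, e2, hlp, map_mul]
      ring
    obtain ⟨τ, hτ⟩ := ih (Fin.tail f) (g ∘ j.succAbove) (fun i => hf i.succ)
      (fun i => hg (j.succAbove i)) (c * u) (mul_ne_zero hc hu) hcanc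
    refine ⟨(finSuccEquiv n).trans ((Equiv.optionCongr τ).trans (finSuccEquiv' j).symm),
      ?_⟩
    intro i
    refine Fin.cases ?_ (fun i => ?_) i
    · simpa using hmk
    · simpa [Fin.tail] using hτ i
end SPAuxSection3

noncomputable section SPAuxSection4
open Polynomial

lemma proj_cvec_congr {n : ℕ} {f g : Fin n → (Fin 2 → ℂ)} (hf : ∀ i, f i ≠ 0)
    (hg : ∀ i, g i ≠ 0)
    (h : ∀ i, Projectivization.mk ℂ (f i) (hf i) = Projectivization.mk ℂ (g i) (hg i)) :
    Projectivization.mk ℂ (cvec f) (cvec_ne_zero hf)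
      = Projectivization.mk ℂ (cvec g) (cvec_ne_zero hg) := by
  have hch : ∀ i, ∃ a : ℂˣ, (a : ℂ) • g i = f i := fun i =>
    (Projectivization.mk_eq_mk_iff ℂ _ _ _ _).1 (h i)
  choose a ha using hch
  have ht : tpoly f = C (∏ i, (a i : ℂ)) * tpoly g := by
    rw [← tpoly_smul]
    congr 1
    funext i
    rw [ha i]
  rw [Projectivization.mk_eq_mk_iff']
  refine ⟨∏ i, (a i : ℂ), ?_⟩
  funext k
  rw [Pi.smul_apply, smul_eq_mul]
  have hkk : cvec f k = (∏ i, (a i : ℂ)) * cvec g k := by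
    show (tpoly f).coeff k = _ * (tpoly g).coeff k
    rw [ht, coeff_C_mul]
  rw [hkk]

/-- The symmetric-product-to-projective-space map, at the level of tuples of points
of `ℙ¹`. -/
noncomputable def psiAux {n : ℕ} (h : Fin n → Projectivization ℂ (Fin 2 → ℂ)) :
    Projectivization ℂ (Fin (n + 1) → ℂ) :=
  Projectivization.mk ℂ (cvec fun i => (h i).rep) (cvec_ne_zero fun i => (h i).rep_nonzero)

lemma psiAux_mk {n : ℕ} (f : Fin n → (Fin 2 → ℂ)) (hf : ∀ i, f i ≠ 0) :
    psiAux (fun i => Projectivization.mk ℂ (f i) (hf i))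
      = Projectivization.mk ℂ (cvec f) (cvec_ne_zero hf) :=
  proj_cvec_congr _ _ fun i => by rw [Projectivization.mk_rep]

lemma cvec_comp_perm {n : ℕ} (f : Fin n → (Fin 2 → ℂ)) (σ : Equiv.Perm (Fin n)) :
    cvec (f ∘ σ) = cvec f := by
  funext k
  show (tpoly (f ∘ σ)).coeff k = (tpoly f).coeff k
  rw [tpoly_comp_perm]

lemma psiAux_comp_perm {n : ℕ} (h : Fin n → Projectivization ℂ (Fin 2 → ℂ))
    (σ : Equiv.Perm (Fin n)) : psiAux (h ∘ σ) = psiAux h := by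
  unfold psiAux
  rw [Projectivization.mk_eq_mk_iff']
  refine ⟨1, ?_⟩
  rw [one_smul]
  exact (cvec_comp_perm (fun i => (h i).rep) σ).symm

/-- Scaling by a unit, as a homeomorphism of the set of nonzero vectors. -/
def sclHomeo (u : ℂˣ) : {v : Fin 2 → ℂ // v ≠ 0} ≃ₜ {v : Fin 2 → ℂ // v ≠ 0} where
  toFun w := ⟨(u : ℂ) • w.1, smul_ne_zero u.ne_zero w.2⟩
  invFun w := ⟨((u⁻¹ : ℂˣ) : ℂ) • w.1, smul_ne_zero u⁻¹.ne_zero w.2⟩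
  left_inv w := Subtype.ext (by
    show ((u⁻¹ : ℂˣ) : ℂ) • ((u : ℂ) • w.1) = w.1
    rw [smul_smul, ← Units.val_mul, inv_mul_cancel, Units.val_one, one_smul])
  right_inv w := Subtype.ext (by
    show ((u : ℂˣ) : ℂ) • (((u⁻¹ : ℂˣ) : ℂ) • w.1) = w.1
    rw [smul_smul, ← Units.val_mul, mul_inv_cancel, Units.val_one, one_smul])
  continuous_toFun := by
    apply Continuous.subtype_mk
    fun_prop
  continuous_invFun := by
    apply Continuous.subtype_mk
    fun_prop

/-- The quotient map onto `ℙ¹(ℂ)`. -/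
def pmk : {v : Fin 2 → ℂ // v ≠ 0} → Projectivization ℂ (Fin 2 → ℂ) := fun v =>
  Projectivization.mk ℂ v.1 v.2

lemma pmk_sclHomeo (u : ℂˣ) (x : {v : Fin 2 → ℂ // v ≠ 0}) : pmk (sclHomeo u x) = pmk x := by
  show Projectivization.mk ℂ ((u : ℂ) • (x : Fin 2 → ℂ)) (smul_ne_zero u.ne_zero x.2)
      = Projectivization.mk ℂ (x : Fin 2 → ℂ) x.2
  rw [Projectivization.mk_eq_mk_iff']
  exact ⟨(u : ℂ), rfl⟩

lemma isOpenQuotientMap_pmk : IsOpenQuotientMap pmk := by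
  refine ⟨fun x => ?_, ?_, fun U hU => ?_⟩
  · induction x using Projectivization.ind with
    | h v hv => exact ⟨⟨v, hv⟩, rfl⟩
  · exact continuous_quot_mk
  · have hsat : pmk ⁻¹' (pmk '' U) = ⋃ u : ℂˣ, (sclHomeo u) '' U := by
      ext w
      simp only [Set.mem_preimage, Set.mem_image, Set.mem_iUnion]
      constructor
      · rintro ⟨x, hxU, hx⟩
        have hx' : Projectivization.mk ℂ (x : Fin 2 → ℂ) x.2
            = Projectivization.mk ℂ (w : Fin 2 → ℂ) w.2 := hx
        rw [Projectivization.mk_eq_mk_iff] at hx'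
        obtain ⟨u, hu⟩ := hx'
        rw [Units.smul_def] at hu
        refine ⟨u⁻¹, x, hxU, Subtype.ext ?_⟩
        show ((u⁻¹ : ℂˣ) : ℂ) • (x : Fin 2 → ℂ) = (w : Fin 2 → ℂ)
        rw [← hu, smul_smul, ← Units.val_mul, inv_mul_cancel, Units.val_one, one_smul]
      · rintro ⟨u, x, hxU, rfl⟩
        exact ⟨x, hxU, (pmk_sclHomeo u x).symm⟩
    have hopen : IsOpen (pmk ⁻¹' (pmk '' U)) := by
      rw [hsat]
      exact isOpen_iUnion fun u => (sclHomeo u).isOpenMap U hU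
    exact (isQuotientMap_quot_mk).isOpen_preimage.1 hopen

/-- `ℙ¹(ℂ)` is compact. -/
instance : CompactSpace (Projectivization ℂ (Fin 2 → ℂ)) := by
  have hne : ∀ v : Metric.sphere (0 : Fin 2 → ℂ) 1, (v : Fin 2 → ℂ) ≠ 0 := by
    intro v hv0
    have hv := v.2
    rw [mem_sphere_zero_iff_norm, hv0] at hv
    simp at hv
  let F : Metric.sphere (0 : Fin 2 → ℂ) 1 → Projectivization ℂ (Fin 2 → ℂ) :=
    fun v => Projectivization.mk ℂ v.1 (hne v)
  have hcont : Continuous F :=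
    continuous_quot_mk.comp (continuous_subtype_val.subtype_mk _)
  have hsurj : Function.Surjective F := by
    intro x
    induction x using Projectivization.ind with
    | h v hv =>
      have hnorm : ‖v‖ ≠ 0 := norm_ne_zero_iff.2 hv
      have hc : ((‖v‖ : ℂ))⁻¹ ≠ 0 := inv_ne_zero (by exact_mod_cast hnorm)
      have hmem : ((‖v‖ : ℂ))⁻¹ • v ∈ Metric.sphere (0 : Fin 2 → ℂ) 1 := by
        rw [mem_sphere_zero_iff_norm, norm_smul, norm_inv, Complex.norm_real,
          Real.norm_eq_abs, abs_of_nonneg (norm_nonneg v), inv_mul_cancel₀ hnorm]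
      refine ⟨⟨_, hmem⟩, ?_⟩
      show Projectivization.mk ℂ (((‖v‖ : ℂ))⁻¹ • v) _ = Projectivization.mk ℂ v hv
      rw [Projectivization.mk_eq_mk_iff']
      exact ⟨((‖v‖ : ℂ))⁻¹, rfl⟩
  exact ⟨by rw [← Set.range_eq_univ.2 hsurj]; exact isCompact_range hcont⟩

/-! ### Hausdorffness of projective spaces -/

/-- The hermitian "norm square" of a vector. -/
noncomputable def Smap {m : ℕ} (v : Fin m → ℂ) : ℂ := ∑ k, v k * (starRingEnd ℂ) (v k)

lemma Smap_eq {m : ℕ} (v : Fin m → ℂ) : Smap v = ((∑ k, Complex.normSq (v k) : ℝ) : ℂ) := by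
  rw [Smap]
  push_cast
  exact Finset.sum_congr rfl fun k _ => Complex.mul_conj _

lemma Smap_ne_zero {m : ℕ} {v : Fin m → ℂ} (hv : v ≠ 0) : Smap v ≠ 0 := by
  rw [Smap_eq, Ne, Complex.ofReal_eq_zero]
  obtain ⟨k, hk⟩ := Function.ne_iff.1 hv
  simp only [Pi.zero_apply] at hk
  exact (Finset.sum_pos' (fun _ _ => Complex.normSq_nonneg _)
    ⟨k, Finset.mem_univ _, Complex.normSq_pos.2 hk⟩).ne'

lemma Smap_smul {m : ℕ} (t : ℂ) (v : Fin m → ℂ) :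
    Smap (t • v) = (t * (starRingEnd ℂ) t) * Smap v := by
  rw [Smap, Smap, Finset.mul_sum]
  refine Finset.sum_congr rfl fun k _ => ?_
  simp only [Pi.smul_apply, smul_eq_mul, map_mul]
  ring

/-- The "projection matrix" map on nonzero vectors. -/
noncomputable def mmapFun {m : ℕ} (v : {w : Fin m → ℂ // w ≠ 0}) : Fin m → Fin m → ℂ :=
  fun i j => v.1 i * (starRingEnd ℂ) (v.1 j) / Smap v.1

lemma mmapFun_scale {m : ℕ} (a b : {w : Fin m → ℂ // w ≠ 0}) (t : ℂ)
    (h : (a : Fin m → ℂ) = t • (b : Fin m → ℂ)) : mmapFun a = mmapFun b := by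
  have ht : t ≠ 0 := by
    rintro rfl
    exact a.2 (by rw [h, zero_smul])
  have ht' : (starRingEnd ℂ) t ≠ 0 := by simpa using ht
  funext i j
  rw [mmapFun, mmapFun, h, Smap_smul]
  simp only [Pi.smul_apply, smul_eq_mul, map_mul]
  field_simp [Smap_ne_zero b.2]

/-- The matrix map on projective space. -/
noncomputable def mmap {m : ℕ} : Projectivization ℂ (Fin m → ℂ) → (Fin m → Fin m → ℂ) :=
  Projectivization.lift mmapFun (fun a b t h => mmapFun_scale a b t h)

lemma mmap_injective {m : ℕ} : Function.Injective (mmap (m := m)) := by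
  intro x y hxy
  induction x using Projectivization.ind with
  | h v hv =>
  induction y using Projectivization.ind with
  | h w hw =>
  have h : mmapFun ⟨v, hv⟩ = mmapFun ⟨w, hw⟩ := hxy
  have hp : ∀ i j, v i * (starRingEnd ℂ) (v j) / Smap v
      = w i * (starRingEnd ℂ) (w j) / Smap w := fun i j => congrFun (congrFun h i) j
  have hSv := Smap_ne_zero hv
  have hSw := Smap_ne_zero hw
  obtain ⟨j, hj⟩ := Function.ne_iff.1 hv
  simp only [Pi.zero_apply] at hj
  have hvv : v j * (starRingEnd ℂ) (v j) ≠ 0 := by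
    rw [Complex.mul_conj]
    exact_mod_cast (Complex.normSq_pos.2 hj).ne'
  have hwj : w j ≠ 0 := by
    intro h0
    have := hp j j
    rw [h0, zero_mul, zero_div] at this
    exact div_ne_zero hvv hSv this
  have hcvj : (starRingEnd ℂ) (v j) ≠ 0 := by simpa using hj
  have hcwj : (starRingEnd ℂ) (w j) ≠ 0 := by simpa using hwj
  have key : ∀ i, v i * (starRingEnd ℂ) (v j) * Smap w
      = w i * (starRingEnd ℂ) (w j) * Smap v := fun i =>
    (div_eq_div_iff hSv hSw).1 (hp i j)
  rw [Projectivization.mk_eq_mk_iff']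
  refine ⟨Smap v * (starRingEnd ℂ) (w j) / (Smap w * (starRingEnd ℂ) (v j)), ?_⟩
  funext i
  rw [Pi.smul_apply, smul_eq_mul]
  rw [div_mul_eq_mul_div, div_eq_iff (mul_ne_zero hSw hcvj)]
  linear_combination -1 * key i

lemma mmap_continuous {m : ℕ} : Continuous (mmap (m := m)) := by
  have hcont : Continuous (mmapFun (m := m)) := by
    refine continuous_pi fun i => continuous_pi fun j => ?_
    have hS : Continuous fun v : {w : Fin m → ℂ // w ≠ 0} => Smap v.1 := by
      simp only [Smap]
      exact continuous_finset_sum _ fun k _ =>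
        ((continuous_apply k).comp continuous_subtype_val).mul
          (Complex.continuous_conj.comp ((continuous_apply k).comp continuous_subtype_val))
    exact (((continuous_apply i).comp continuous_subtype_val).mul
      (Complex.continuous_conj.comp ((continuous_apply j).comp continuous_subtype_val))).div
      hS fun v => Smap_ne_zero v.2
  exact (isQuotientMap_quot_mk).continuous_iff.2 hcont

instance (m : ℕ) : T2Space (Projectivization ℂ (Fin m → ℂ)) :=
  T2Space.of_injective_continuous mmap_injective mmap_continuous

end SPAuxSection4

noncomputable section SPMain
open Polynomial

instance (n : ℕ) : CompactSpace (SP n (Projectivization ℂ (Fin 2 → ℂ))) :=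
  inferInstanceAs (CompactSpace (Quotient (SPSetoid n (Projectivization ℂ (Fin 2 → ℂ)))))

/-- The `n`-th symmetric product of the Riemann sphere `ℙ¹(ℂ)` is homeomorphic to
complex projective `n`-space `ℙⁿ(ℂ)`. -/
theorem SP_riemannSphere_homeomorph_projectiveSpace (n : ℕ) (hn : 1 ≤ n) :
    Nonempty (SP n (Projectivization ℂ (Fin 2 → ℂ)) ≃ₜ
      Projectivization ℂ (Fin (n + 1) → ℂ)) := by
  classical
  -- the map descends to the symmetric product
  have hresp : ∀ (a b : Fin n → Projectivization ℂ (Fin 2 → ℂ)),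
      (SPSetoid n (Projectivization ℂ (Fin 2 → ℂ))).r a b → psiAux a = psiAux b := by
    rintro a b ⟨σ, rfl⟩
    exact (psiAux_comp_perm a σ).symm
  let Φ : SP n (Projectivization ℂ (Fin 2 → ℂ)) → Projectivization ℂ (Fin (n + 1) → ℂ) :=
    Quotient.lift psiAux hresp
  -- injectivity
  have hinj : Function.Injective Φ := by
    intro x y
    refine Quotient.inductionOn₂ x y ?_
    intro h1 h2 hψ
    have hψ' : psiAux h1 = psiAux h2 := hψ
    have hf : ∀ i, (h1 i).rep ≠ 0 := fun i => (h1 i).rep_nonzero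
    have hg : ∀ i, (h2 i).rep ≠ 0 := fun i => (h2 i).rep_nonzero
    have hmk : Projectivization.mk ℂ (cvec fun i => (h1 i).rep) (cvec_ne_zero hf)
        = Projectivization.mk ℂ (cvec fun i => (h2 i).rep) (cvec_ne_zero hg) := hψ'
    rw [Projectivization.mk_eq_mk_iff] at hmk
    obtain ⟨a, ha⟩ := hmk
    rw [Units.smul_def] at ha
    have htp : tpoly (fun i => (h1 i).rep) = C (a : ℂ) * tpoly (fun i => (h2 i).rep) := by
      refine tpoly_eq_of_cvec_smul fun k => ?_
      have := congrFun ha k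
      rw [Pi.smul_apply, smul_eq_mul] at this
      exact this.symm
    obtain ⟨σ, hσ⟩ := exists_perm_of_tpoly_eq _ _ hf hg (a : ℂ) a.ne_zero htp
    have hh : ∀ i, h2 (σ i) = h1 i := by
      intro i
      have := hσ i
      rwa [Projectivization.mk_rep, Projectivization.mk_rep] at this
    refine Quotient.sound ⟨σ.symm, funext fun i => ?_⟩
    show h1 (σ.symm i) = h2 i
    rw [← hh (σ.symm i), Equiv.apply_symm_apply]
  -- surjectivity
  have hsurj : Function.Surjective Φ := by
    intro x
    induction x using Projectivization.ind with
    | h c hc =>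
      set P : ℂ[X] := ∑ k : Fin (n + 1), monomial (k : ℕ) (c k) with hPdef
      have coeffP : ∀ k : Fin (n + 1), P.coeff k = c k := by
        intro k
        rw [hPdef, finset_sum_coeff]
        have : ∀ j : Fin (n + 1),
            (monomial (j : ℕ) (c j)).coeff (k : ℕ) = if j = k then c j else 0 := by
          intro j
          rw [coeff_monomial]
          simp [Fin.val_eq_val]
        rw [Finset.sum_congr rfl fun j _ => this j]
        simp
      have hP : P ≠ 0 := by
        intro h0
        apply hc
        funext k
        rw [← coeffP k, h0, coeff_zero]
        rfl
      have hdeg : P.natDegree ≤ n := by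
        refine natDegree_sum_le_of_forall_le _ _ fun k _ => ?_
        exact (natDegree_monomial_le _).trans (by omega)
      obtain ⟨f, e, hf, he, hfe⟩ := exists_tuple n P hP hdeg
      refine ⟨Quotient.mk (SPSetoid n (Projectivization ℂ (Fin 2 → ℂ)))
        (fun i => Projectivization.mk ℂ (f i) (hf i)), ?_⟩
      show psiAux (fun i => Projectivization.mk ℂ (f i) (hf i)) = Projectivization.mk ℂ c hc
      rw [psiAux_mk f hf, Projectivization.mk_eq_mk_iff']
      refine ⟨e, ?_⟩
      funext k
      rw [Pi.smul_apply, smul_eq_mul]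
      show e * c k = (tpoly f).coeff k
      rw [hfe, coeff_C_mul, coeffP k]
  -- continuity
  have hpi : IsOpenQuotientMap (Pi.map fun _ : Fin n => pmk) :=
    IsOpenQuotientMap.piMap fun _ => isOpenQuotientMap_pmk
  have hψcont : Continuous (psiAux (n := n)) := by
    refine hpi.isQuotientMap.continuous_iff.mpr ?_
    have heq : (psiAux ∘ Pi.map fun _ : Fin n => pmk)
        = fun F : Fin n → {v : Fin 2 → ℂ // v ≠ 0} =>
          Projectivization.mk ℂ (cvec fun i => (F i).1) (cvec_ne_zero fun i => (F i).2) := by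
      funext F
      exact psiAux_mk (fun i => (F i).1) (fun i => (F i).2)
    rw [heq]
    have h1 : Continuous fun F : Fin n → {v : Fin 2 → ℂ // v ≠ 0} => (fun i => (F i).1) :=
      continuous_pi fun i => continuous_subtype_val.comp (continuous_apply i)
    have h2 : Continuous fun F : Fin n → {v : Fin 2 → ℂ // v ≠ 0} => cvec fun i => (F i).1 :=
      continuous_pi fun k => (continuous_coeff_tpoly n k).comp h1
    exact continuous_quot_mk.comp (h2.subtype_mk _)
  have hΦ : Continuous Φ := (isQuotientMap_quot_mk).continuous_iff.mpr hψcont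
  exact ⟨Continuous.homeoOfEquivCompactToT2 (f := Equiv.ofBijective Φ ⟨hinj, hsurj⟩) hΦ⟩

end SPMain
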